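/- For every γ ≥ 0, the vector β*(γ) = (β*_i(γ))_{i∈S} is an optimal solution of the dual program D*(γ): it is feasible (β*_i(γ) ≥ 0 for all i, and γ + Σ_{i∈sub(a)} β*_i(γ)·π(i)/π(a) ≥ c^f(a) for every a ∈ S), and it attains the minimum value of λ·Σ_{i∈S} π(i)·β_i + μ·γ over all feasible β. -/

import Mathlib

open scoped Classical
open Finset

/-- A finite tree-structured Markov chain: a finite state space partitioned into
levels `0, …, L-1`, a root `r` at level `0`, a parent map `pa` (with `pa r = r` by
convention), and transition probabilities `p i ∈ (0,1]` of being reached from the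
parent, with `p r = 1`. -/
structure TreeMC (S : Type*) [Fintype S] [DecidableEq S] where
  /-- the number of levels -/
  L : ℕ
  /-- the root -/
  r : S
  /-- the parent map (with `pa r = r` by convention) -/
  pa : S → S
  /-- the level of each state -/
  level : S → ℕ
  /-- the probability of being reached from the parent -/
  p : S → ℝ
  level_lt : ∀ i, level i < L
  level_r : level r = 0
  root_unique : ∀ i, level i = 0 → i = r
  pa_r : pa r = r
  level_pa : ∀ i, i ≠ r → level (pa i) + 1 = level i
  p_pos : ∀ i, 0 < p i
  p_le_one : ∀ i, p i ≤ 1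
  p_r : p r = 1

namespace TreeMC

variable {S : Type*} [Fintype S] [DecidableEq S] (M : TreeMC S)

/-- The ancestors of `i`: states on the path from the root to `i` (both included). -/
noncomputable def anc (i : S) : Finset S :=
  Finset.univ.filter fun a => ∃ n : ℕ, M.pa^[n] i = a

/-- The subtree of `i`: all states having `i` as an ancestor. -/
noncomputable def subt (i : S) : Finset S :=
  Finset.univ.filter fun k => i ∈ M.anc k

/-- The subtree of a set of states. -/
noncomputable def subF (X : Finset S) : Finset S :=
  Finset.univ.filter fun k => ∃ i ∈ X, k ∈ M.subt i

/-- `π i`: the probability that a job passes through state `i`. -/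
noncomputable def pi (i : S) : ℝ :=
  ∏ a ∈ M.anc i, M.p a

/-- The children of `i`. -/
noncomputable def child (i : S) : Finset S :=
  Finset.univ.filter fun k => k ≠ M.r ∧ M.pa k = i

/-- `T` is the top set of `X`: a subset of `X` whose subtree covers `X` and in which
no state lies in the subtree of a different state. -/
def IsTopSet (X T : Finset S) : Prop :=
  T ⊆ X ∧ X ⊆ M.subF T ∧ ∀ i ∈ T, ∀ k ∈ T, i ≠ k → k ∉ M.subt i

/-- Expected future cost conditional on being in state `a`. -/
noncomputable def cf (c : S → ℝ) (a : S) : ℝ :=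
  ∑ i ∈ M.subt a, c i * M.pi i / M.pi a

/-- `V` is the ski-rental value function:
`V γ i = min (γ, c i + Σ_{k ∈ child i} p k · V γ k)`. -/
def IsSkiValue (c : S → ℝ) (V : ℝ → S → ℝ) : Prop :=
  ∀ γ : ℝ, ∀ i : S, V γ i = min γ (c i + ∑ k ∈ M.child i, M.p k * V γ k)

/-- Expected future cost-to-go `V^f`. -/
noncomputable def Vf (V : ℝ → S → ℝ) (γ : ℝ) (i : S) : ℝ :=
  ∑ k ∈ M.child i, M.p k * V γ k

/-- The candidate optimal state duals `β*(γ)`. -/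
noncomputable def betaStar (c : S → ℝ) (V : ℝ → S → ℝ) (γ : ℝ) (i : S) : ℝ :=
  max 0 (c i + M.Vf V γ i - γ)

/-- Feasibility for the dual program `D*(γ)`. -/
def DualFeasible (c : S → ℝ) (γ : ℝ) (β : S → ℝ) : Prop :=
  (∀ i, 0 ≤ β i) ∧ ∀ a, M.cf c a ≤ γ + ∑ i ∈ M.subt a, β i * M.pi i / M.pi a

/-- Feasibility for the fluid LP (OriginalFluid). -/
def OrigFeasible (lam mu : ℝ) (q ν : S → ℝ) : Prop :=
  (∀ i, 0 ≤ q i) ∧ (∀ i, 0 ≤ ν i) ∧ q M.r = lam ∧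
    (∀ i, i ≠ M.r → q i = (q (M.pa i) - ν (M.pa i)) * M.p i) ∧
    (∀ i, ν i ≤ q i) ∧ ∑ i : S, ν i ≤ mu

/-- Feasibility for the fluid LP (SimplerFluid). -/
def SimpFeasible (lam mu : ℝ) (ν : S → ℝ) : Prop :=
  (∀ i, 0 ≤ ν i) ∧ (∀ i, ∑ a ∈ M.anc i, ν a * M.pi i / M.pi a ≤ lam * M.pi i) ∧
    ∑ i : S, ν i ≤ mu

end TreeMC

namespace TreeMC

variable {S : Type*} [Fintype S] [DecidableEq S] (M : TreeMC S)

lemma ne_root {i : S} (h : M.level i ≠ 0) : i ≠ M.r := by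
  intro e; subst e; exact h M.level_r

lemma level_pa_le (x : S) : M.level (M.pa x) ≤ M.level x := by
  by_cases h : x = M.r
  · subst h; rw [M.pa_r]
  · have := M.level_pa x h; omega

lemma level_iter_le (n : ℕ) (x : S) : M.level (M.pa^[n] x) ≤ M.level x := by
  induction n with
  | zero => simp
  | succ n ih => rw [Function.iterate_succ_apply']; exact (M.level_pa_le _).trans ih

lemma level_iter {n : ℕ} {x : S} (h : n ≤ M.level x) :
    M.level (M.pa^[n] x) = M.level x - n := by
  induction n with
  | zero => simp
  | succ n ih =>
    have h1 : M.level (M.pa^[n] x) = M.level x - n := ih (by omega)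
    have hne : M.pa^[n] x ≠ M.r := M.ne_root (by omega)
    have h2 := M.level_pa _ hne
    rw [Function.iterate_succ_apply']
    omega

lemma iter_level_root (x : S) : M.pa^[M.level x] x = M.r := by
  have := M.level_iter (le_refl (M.level x))
  exact M.root_unique _ (by omega)

lemma iter_root (n : ℕ) : M.pa^[n] M.r = M.r :=
  Function.iterate_fixed M.pa_r n

lemma mem_anc_iff {a i : S} : a ∈ M.anc i ↔ ∃ n, M.pa^[n] i = a := by
  simp [TreeMC.anc]

lemma mem_subt_iff {k a : S} : k ∈ M.subt a ↔ ∃ n, M.pa^[n] k = a := by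
  simp [TreeMC.subt, TreeMC.anc]

lemma self_mem_anc (i : S) : i ∈ M.anc i := M.mem_anc_iff.2 ⟨0, rfl⟩

lemma level_le_of_mem_anc {a i : S} (h : a ∈ M.anc i) : M.level a ≤ M.level i := by
  obtain ⟨n, rfl⟩ := M.mem_anc_iff.1 h
  exact M.level_iter_le n i

lemma subt_root : M.subt M.r = Finset.univ := by
  ext k
  simp only [Finset.mem_univ, iff_true, M.mem_subt_iff]
  exact ⟨M.level k, M.iter_level_root k⟩

lemma anc_root : M.anc M.r = {M.r} := by
  ext a
  simp only [M.mem_anc_iff, Finset.mem_singleton]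
  constructor
  · rintro ⟨n, rfl⟩; exact (M.iter_root n)
  · rintro rfl; exact ⟨0, rfl⟩

lemma not_mem_anc_pa {i : S} (h : i ≠ M.r) : i ∉ M.anc (M.pa i) := by
  intro hmem
  have h1 := M.level_le_of_mem_anc hmem
  have h2 := M.level_pa i h
  omega

lemma anc_eq_insert {i : S} (h : i ≠ M.r) : M.anc i = insert i (M.anc (M.pa i)) := by
  ext a
  simp only [M.mem_anc_iff, Finset.mem_insert]
  constructor
  · rintro ⟨n, rfl⟩
    cases n with
    | zero => exact Or.inl rfl
    | succ n => exact Or.inr ⟨n, by rw [← Function.iterate_succ_apply]⟩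
  · rintro (rfl | ⟨n, rfl⟩)
    · exact ⟨0, rfl⟩
    · exact ⟨n + 1, by rw [Function.iterate_succ_apply]⟩

lemma pi_pos (i : S) : 0 < M.pi i :=
  Finset.prod_pos fun a _ => M.p_pos a

lemma pi_root : M.pi M.r = 1 := by
  rw [TreeMC.pi, M.anc_root, Finset.prod_singleton, M.p_r]

lemma pi_child {k : S} (h : k ≠ M.r) : M.pi k = M.p k * M.pi (M.pa k) := by
  rw [TreeMC.pi, M.anc_eq_insert h, Finset.prod_insert (M.not_mem_anc_pa h)]
  rfl

lemma mem_child_iff {k a : S} : k ∈ M.child a ↔ k ≠ M.r ∧ M.pa k = a := by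
  simp [TreeMC.child]

lemma level_child {k a : S} (h : k ∈ M.child a) : M.level k = M.level a + 1 := by
  obtain ⟨h1, h2⟩ := M.mem_child_iff.1 h
  have := M.level_pa k h1
  rw [h2] at this
  omega

lemma iter_eq_self_of_level_eq {x : S} {d : ℕ}
    (h : M.level (M.pa^[d] x) = M.level x) : M.pa^[d] x = x := by
  rcases le_or_gt d (M.level x) with hd | hd
  · have h1 := M.level_iter hd
    by_cases hx : M.level x = 0
    · have hr : x = M.r := M.root_unique x hx
      subst hr; exact M.iter_root d
    · have : d = 0 := by omega
      subst this; rfl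
  · have h1 : M.pa^[d] x = M.r := by
      have : d = (d - M.level x) + M.level x := by omega
      rw [this, Function.iterate_add_apply, M.iter_level_root, M.iter_root]
    rw [h1] at h ⊢
    rw [M.level_r] at h
    exact (M.root_unique x h.symm).symm

lemma iter_eq_of_level_eq {j x y : S} {n m : ℕ} (hx : M.pa^[n] j = x)
    (hy : M.pa^[m] j = y) (h : M.level x = M.level y) : x = y := by
  rcases le_total n m with hnm | hnm
  · have hd : M.pa^[m - n] x = y := by
      rw [← hx, ← Function.iterate_add_apply]
      rw [show m - n + n = m by omega]; exact hy
    have hs := M.iter_eq_self_of_level_eq (x := x) (d := m - n) (by rw [hd, ← h])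
    rw [← hd, hs]
  · have hd : M.pa^[n - m] y = x := by
      rw [← hy, ← Function.iterate_add_apply]
      rw [show n - m + m = n by omega]; exact hx
    have hs := M.iter_eq_self_of_level_eq (x := y) (d := n - m) (by rw [hd, h])
    rw [← hd]; exact hs

lemma not_mem_subt_child {a k : S} (hk : k ∈ M.child a) : a ∉ M.subt k := by
  intro hmem
  obtain ⟨n, hn⟩ := M.mem_subt_iff.1 hmem
  have h1 : M.level k ≤ M.level a := by rw [← hn]; exact M.level_iter_le n a
  have h2 := M.level_child hk
  omega

lemma subt_decomp (a : S) : M.subt a = insert a ((M.child a).biUnion M.subt) := by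
  ext j
  simp only [Finset.mem_insert, Finset.mem_biUnion]
  constructor
  · intro hj
    obtain ⟨n, hn⟩ := M.mem_subt_iff.1 hj
    by_cases hja : j = a
    · exact Or.inl hja
    · right
      have hex : ∃ m, M.pa^[m] j = a := ⟨n, hn⟩
      have hms := Nat.find_spec hex
      have hm0 : Nat.find hex ≠ 0 := by
        intro h0; rw [h0] at hms; exact hja hms
      obtain ⟨m', hm'⟩ : ∃ m', Nat.find hex = m' + 1 := ⟨Nat.find hex - 1, by omega⟩
      have hpk : M.pa (M.pa^[m'] j) = a := by
        have h1 : M.pa^[m' + 1] j = a := by rw [← hm']; exact hms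
        rwa [Function.iterate_succ_apply'] at h1
      have hka : M.pa^[m'] j ≠ a := fun h =>
        Nat.find_min hex (show m' < Nat.find hex by omega) h
      have hkr : M.pa^[m'] j ≠ M.r := by
        intro h; rw [h, M.pa_r] at hpk; exact hka (h.trans hpk)
      exact ⟨_, M.mem_child_iff.2 ⟨hkr, hpk⟩, M.mem_subt_iff.2 ⟨m', rfl⟩⟩
  · rintro (rfl | ⟨k, hk, hjk⟩)
    · exact M.mem_subt_iff.2 ⟨0, rfl⟩
    · obtain ⟨n, hn⟩ := M.mem_subt_iff.1 hjk
      obtain ⟨_, hpk⟩ := M.mem_child_iff.1 hk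
      exact M.mem_subt_iff.2 ⟨n + 1, by rw [Function.iterate_succ_apply', hn, hpk]⟩

lemma not_mem_child_biUnion (a : S) : a ∉ (M.child a).biUnion M.subt := by
  intro h
  rw [Finset.mem_biUnion] at h
  obtain ⟨k, hk, hmem⟩ := h
  exact M.not_mem_subt_child hk hmem

lemma child_pairwiseDisjoint (a : S) :
    (↑(M.child a) : Set S).PairwiseDisjoint M.subt := by
  intro k1 h1 k2 h2 hne
  simp only [Function.onFun]
  rw [Finset.disjoint_left]
  intro j hj1 hj2
  obtain ⟨n, hn⟩ := M.mem_subt_iff.1 hj1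
  obtain ⟨m, hm⟩ := M.mem_subt_iff.1 hj2
  have hl : M.level k1 = M.level k2 := by
    rw [M.level_child (Finset.mem_coe.1 h1), M.level_child (Finset.mem_coe.1 h2)]
  exact hne (M.iter_eq_of_level_eq hn hm hl)

lemma sum_subt (f : S → ℝ) (a : S) :
    ∑ i ∈ M.subt a, f i = f a + ∑ k ∈ M.child a, ∑ i ∈ M.subt k, f i := by
  rw [M.subt_decomp a, Finset.sum_insert (M.not_mem_child_biUnion a),
    Finset.sum_biUnion (M.child_pairwiseDisjoint a)]

lemma pi_child' {k a : S} (hk : k ∈ M.child a) : M.pi k = M.p k * M.pi a := by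
  obtain ⟨h1, h2⟩ := M.mem_child_iff.1 hk
  rw [M.pi_child h1, h2]

lemma betaStar_eq (c : S → ℝ) (V : ℝ → S → ℝ) (hV : M.IsSkiValue c V) (γ : ℝ) (i : S) :
    M.betaStar c V γ i = c i + M.Vf V γ i - V γ i := by
  have h := hV γ i
  rw [TreeMC.betaStar, h, TreeMC.Vf]
  rcases le_total γ (c i + ∑ k ∈ M.child i, M.p k * V γ k) with hle | hle
  · rw [min_eq_left hle, max_eq_right (by linarith)]
  · rw [min_eq_right hle, max_eq_left (by linarith)]
    ring

lemma V_le (c : S → ℝ) (V : ℝ → S → ℝ) (hV : M.IsSkiValue c V) (γ : ℝ) (i : S) :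
    V γ i ≤ γ := by
  rw [hV γ i]; exact min_le_left _ _

lemma sum_betaStar (c : S → ℝ) (V : ℝ → S → ℝ) (hV : M.IsSkiValue c V) (γ : ℝ) :
    ∀ n : ℕ, ∀ a : S, M.L - M.level a ≤ n →
      ∑ i ∈ M.subt a, M.betaStar c V γ i * M.pi i
        = (∑ i ∈ M.subt a, c i * M.pi i) - V γ a * M.pi a := by
  intro n
  induction n with
  | zero => intro a ha; have := M.level_lt a; omega
  | succ n ih =>
    intro a ha
    have hIH : ∀ k ∈ M.child a,
        ∑ i ∈ M.subt k, M.betaStar c V γ i * M.pi i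
          = (∑ i ∈ M.subt k, c i * M.pi i) - V γ k * M.pi k := by
      intro k hk
      exact ih k (by have := M.level_child hk; omega)
    rw [M.sum_subt (fun i => M.betaStar c V γ i * M.pi i) a,
      M.sum_subt (fun i => c i * M.pi i) a,
      Finset.sum_congr rfl hIH, M.betaStar_eq c V hV γ a]
    have hVf : M.Vf V γ a * M.pi a = ∑ k ∈ M.child a, V γ k * M.pi k := by
      rw [TreeMC.Vf, Finset.sum_mul]
      refine Finset.sum_congr rfl fun k hk => ?_
      rw [M.pi_child' hk]; ring
    rw [Finset.sum_sub_distrib]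
    have h2 : (c a + M.Vf V γ a - V γ a) * M.pi a
        = c a * M.pi a + M.Vf V γ a * M.pi a - V γ a * M.pi a := by ring
    rw [h2, hVf]
    ring

lemma sum_betaStar_le (c : S → ℝ) (V : ℝ → S → ℝ) (hV : M.IsSkiValue c V) (γ : ℝ)
    (β : S → ℝ) (hβ : M.DualFeasible c γ β) :
    ∀ n : ℕ, ∀ a : S, M.L - M.level a ≤ n →
      ∑ i ∈ M.subt a, M.betaStar c V γ i * M.pi i ≤ ∑ i ∈ M.subt a, β i * M.pi i := by
  intro n
  induction n with
  | zero => intro a ha; have := M.level_lt a; omega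
  | succ n ih =>
    intro a ha
    have hπ : 0 < M.pi a := M.pi_pos a
    rcases le_total γ (c a + M.Vf V γ a) with hle | hle
    · -- V γ a = γ; use feasibility at a
      have hVa : V γ a = γ := by
        rw [hV γ a]; exact min_eq_left hle
      have hkey := M.sum_betaStar c V hV γ (n + 1) a ha
      rw [hkey, hVa]
      have hfeas := hβ.2 a
      rw [TreeMC.cf] at hfeas
      have h1 : ∑ i ∈ M.subt a, c i * M.pi i / M.pi a
          = (∑ i ∈ M.subt a, c i * M.pi i) / M.pi a := (Finset.sum_div _ _ _).symm
      have h2 : ∑ i ∈ M.subt a, β i * M.pi i / M.pi a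
          = (∑ i ∈ M.subt a, β i * M.pi i) / M.pi a := (Finset.sum_div _ _ _).symm
      rw [h1, h2] at hfeas
      rw [div_le_iff₀ hπ] at hfeas
      calc (∑ i ∈ M.subt a, c i * M.pi i) - γ * M.pi a
          ≤ (γ + (∑ i ∈ M.subt a, β i * M.pi i) / M.pi a) * M.pi a - γ * M.pi a := by
            linarith
        _ = ∑ i ∈ M.subt a, β i * M.pi i := by
            field_simp
            ring
    · -- β* a = 0; recurse on children
      have hb0 : M.betaStar c V γ a = 0 := by
        rw [TreeMC.betaStar]; exact max_eq_left (by rw [TreeMC.Vf] at *; linarith)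
      rw [M.sum_subt (fun i => M.betaStar c V γ i * M.pi i) a,
        M.sum_subt (fun i => β i * M.pi i) a, hb0, zero_mul, zero_add]
      have hβa : 0 ≤ β a * M.pi a := mul_nonneg (hβ.1 a) hπ.le
      have hsum : ∑ k ∈ M.child a, ∑ i ∈ M.subt k, M.betaStar c V γ i * M.pi i
          ≤ ∑ k ∈ M.child a, ∑ i ∈ M.subt k, β i * M.pi i := by
        refine Finset.sum_le_sum fun k hk => ?_
        exact ih k (by have := M.level_child hk; omega)
      linarith

end TreeMC

/-- For every `γ ≥ 0`, the vector `β*(γ)` is an optimal solution of the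
dual program `D*(γ)`: it is feasible, and it attains the minimum of
`λ·Σ_{i∈S} π(i)·β_i + μ·γ` over all feasible `β`. -/
theorem betaStar_optimal_dual {S : Type*} [Fintype S] [DecidableEq S]
    (M : TreeMC S) (c : S → ℝ) (hc : ∀ i, 0 < c i)
    (V : ℝ → S → ℝ) (hV : M.IsSkiValue c V)
    (lam mu : ℝ) (hlam0 : 0 < lam) (hlam1 : lam < 1) (hmu0 : 0 < mu) (hmu1 : mu ≤ 1)
    (γ : ℝ) (hγ : 0 ≤ γ) :
    M.DualFeasible c γ (M.betaStar c V γ) ∧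
      ∀ β : S → ℝ, M.DualFeasible c γ β →
        lam * ∑ i : S, M.pi i * M.betaStar c V γ i + mu * γ ≤
          lam * ∑ i : S, M.pi i * β i + mu * γ := by
  constructor
  · constructor
    · intro i; exact le_max_left _ _
    · intro a
      have hπ : 0 < M.pi a := M.pi_pos a
      have hkey := M.sum_betaStar c V hV γ (M.L) a (by omega)
      have hVa : V γ a ≤ γ := M.V_le c V hV γ a
      rw [TreeMC.cf]
      have h1 : ∑ i ∈ M.subt a, c i * M.pi i / M.pi a
          = (∑ i ∈ M.subt a, c i * M.pi i) / M.pi a := (Finset.sum_div _ _ _).symm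
      have h2 : ∑ i ∈ M.subt a, M.betaStar c V γ i * M.pi i / M.pi a
          = (∑ i ∈ M.subt a, M.betaStar c V γ i * M.pi i) / M.pi a :=
        (Finset.sum_div _ _ _).symm
      rw [h1, h2, hkey]
      rw [sub_div, mul_div_assoc, div_self hπ.ne', mul_one, div_le_iff₀ hπ, add_mul,
        sub_mul, div_mul_cancel₀ _ hπ.ne']
      nlinarith
  · intro β hβ
    have hπr : M.pi M.r = 1 := M.pi_root
    have hmain : ∑ i ∈ M.subt M.r, M.betaStar c V γ i * M.pi i
        ≤ ∑ i ∈ M.subt M.r, β i * M.pi i :=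
      M.sum_betaStar_le c V hV γ β hβ (M.L) M.r (by omega)
    rw [M.subt_root] at hmain
    have h1 : ∑ i : S, M.pi i * M.betaStar c V γ i
        = ∑ i : S, M.betaStar c V γ i * M.pi i :=
      Finset.sum_congr rfl fun i _ => mul_comm _ _
    have h2 : ∑ i : S, M.pi i * β i = ∑ i : S, β i * M.pi i :=
      Finset.sum_congr rfl fun i _ => mul_comm _ _
    rw [h1, h2]
    have := mul_le_mul_of_nonneg_left hmain hlam0.le
    linarith
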